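/- Let X = ∏_{i∈I} X_i be a product of T0 spaces and A an irreducible subset of X. Then the closure of A in X equals the product ∏_{i∈I} cl_{X_i}(p_i(A)) of the closures of its projections. -/

import Mathlib

/-- Auxiliary: an irreducible set meets any finite intersection of open sets it meets. -/
theorem irreducible_inter_biInter {Y : Type*} [TopologicalSpace Y] {A : Set Y}
    (hA : IsIrreducible A) {ι : Type*} {I : Set ι} (hI : I.Finite) (U : ι → Set Y)
    (hUo : ∀ i ∈ I, IsOpen (U i)) (hUA : ∀ i ∈ I, (A ∩ U i).Nonempty) :
    (A ∩ ⋂ i ∈ I, U i).Nonempty := by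
  revert hUo hUA
  refine Set.Finite.induction_on I hI (motive := fun I _ => (∀ i ∈ I, IsOpen (U i)) → (∀ i ∈ I, (A ∩ U i).Nonempty) →
    (A ∩ ⋂ i ∈ I, U i).Nonempty) (fun _ _ => by simpa using hA.nonempty) ?_
  intro a s _ hs ih hUo hUA
  rw [Set.biInter_insert, Set.inter_comm (U a)]
  refine hA.2 _ _ (Set.Finite.isOpen_biInter hs fun i hi => hUo i (Set.mem_insert_of_mem _ hi))
    (hUo a (Set.mem_insert _ _)) ?_ (hUA a (Set.mem_insert _ _))
  exact ih (fun i hi => hUo i (Set.mem_insert_of_mem _ hi))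
    (fun i hi => hUA i (Set.mem_insert_of_mem _ hi))

/-- In a product of T0 spaces, the closure of an irreducible set `A` is the product of the
closures of its projections. -/
theorem closure_irreducible_prod {ι : Type*} {X : ι → Type*} [∀ i, TopologicalSpace (X i)]
    [∀ i, T0Space (X i)] (A : Set (∀ i, X i)) (hA : IsIrreducible A) :
    closure A = Set.univ.pi fun i => closure ((fun f => f i) '' A) := by
  apply Set.Subset.antisymm
  · exact closure_minimal (fun a ha i _ => subset_closure ⟨a, ha, rfl⟩)
      (isClosed_set_pi fun i _ => isClosed_closure)
  · intro x hx
    rw [mem_closure_iff_nhds]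
    intro s hs
    rw [nhds_pi, Filter.mem_pi] at hs
    obtain ⟨I, hI, V, hV, hVs⟩ := hs
    choose W hWV hWo hxW using fun i => mem_nhds_iff.mp (hV i)
    have key : (A ∩ ⋂ i ∈ I, (fun f : ∀ i, X i => f i) ⁻¹' W i).Nonempty := by
      refine irreducible_inter_biInter hA hI _ (fun i _ => (hWo i).preimage (continuous_apply i))
        fun i hi => ?_
      have hxi : x i ∈ closure ((fun f => f i) '' A) := hx i (Set.mem_univ i)
      obtain ⟨y, hyA, hyW⟩ := mem_closure_iff_nhds.mp hxi (W i)
        ((hWo i).mem_nhds (hxW i))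
      · obtain ⟨a, haA, ha⟩ := hyW
        refine ⟨a, haA, ?_⟩
        simp only [Set.mem_preimage]
        rw [show a i = y from ha]
        exact hyA
    obtain ⟨a, haA, ha⟩ := key
    refine ⟨a, hVs fun i hi => hWV i ?_, haA⟩
    · simpa using Set.mem_iInter₂.mp ha i hi
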